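/- Let ψ, η ∈ ℚ[[q]] with ψ(0) = 1 (so ψ is a unit), and let f ∈ ℚ[[q]] have invertible derivative f'. Define the operators D₀(g) = ψ⁻¹·g' and D₂(g) = ψ⁻¹·(g' + η·g) on ℚ[[q]]. Then D₀(f) is a unit; setting R = D₂(D₀(f))·(D₀(f))⁻¹, one has R = ψ⁻¹·(f''/f' + η − ψ'/ψ), and the identity D₂(R) − (1/2)·R² = ψ⁻²·( S_q f + (η − ψ'/ψ)' + (1/2)·(η − ψ'/ψ)² ) holds. (This is the change-of-derivation formula relating the Schwarzian of the twisted derivation ∂_{q,t} = tψ⁻¹(∂_q + (i/2)η) to the ordinary formal Schwarzian S_q f, after stripping the grading variable t.) -/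

import Mathlib

/-- The formal derivative `df/dq` on `ℚ[[q]]`. -/
noncomputable def sder (f : PowerSeries ℚ) : PowerSeries ℚ := PowerSeries.derivative ℚ f

/-- The formal Schwarzian derivative
`S_q f = (f''/f')' − (1/2)(f''/f')²`, for `f` with invertible `f'`. -/
noncomputable def schwarzian (f : PowerSeries ℚ) : PowerSeries ℚ :=
  sder (sder (sder f) * (sder f)⁻¹)
    - PowerSeries.C (1 / 2 : ℚ) * (sder (sder f) * (sder f)⁻¹) ^ 2

/-- The operator `D₀(g) = ψ⁻¹·g'`. -/
noncomputable def D0 (ψ g : PowerSeries ℚ) : PowerSeries ℚ := ψ⁻¹ * sder g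

/-- The operator `D₂(g) = ψ⁻¹·(g' + η·g)`. -/
noncomputable def D2 (ψ η g : PowerSeries ℚ) : PowerSeries ℚ := ψ⁻¹ * (sder g + η * g)

lemma sder_mul (a b : PowerSeries ℚ) : sder (a * b) = a * sder b + b * sder a := by
  simpa [sder, smul_eq_mul] using Derivation.leibniz (PowerSeries.derivative ℚ) a b

lemma sder_add (a b : PowerSeries ℚ) : sder (a + b) = sder a + sder b := map_add _ _ _

lemma sder_sub (a b : PowerSeries ℚ) : sder (a - b) = sder a - sder b := map_sub _ _ _

lemma sder_inv (a : PowerSeries ℚ) : sder a⁻¹ = -a⁻¹ ^ 2 * sder a := by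
  simp [sder]


/-- Change-of-derivation formula for the Schwarzian: with `ψ(0) = 1` and `f'`
invertible, `D₀(f)` is a unit; `R = D₂(D₀ f)·(D₀ f)⁻¹` equals
`ψ⁻¹·(f''/f' + η − ψ'/ψ)`, and
`D₂(R) − (1/2)R² = ψ⁻²·(S_q f + (η − ψ'/ψ)' + (1/2)(η − ψ'/ψ)²)`. -/
theorem twisted_schwarzian_formula (ψ η f : PowerSeries ℚ)
    (hψ : PowerSeries.constantCoeff ψ = 1)
    (hf : IsUnit (sder f)) :
    IsUnit (D0 ψ f) ∧
    D2 ψ η (D0 ψ f) * (D0 ψ f)⁻¹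
      = ψ⁻¹ * (sder (sder f) * (sder f)⁻¹ + η - sder ψ * ψ⁻¹) ∧
    D2 ψ η (D2 ψ η (D0 ψ f) * (D0 ψ f)⁻¹)
        - PowerSeries.C (1 / 2 : ℚ) * (D2 ψ η (D0 ψ f) * (D0 ψ f)⁻¹) ^ 2
      = ψ⁻¹ ^ 2 *
          (schwarzian f + sder (η - sder ψ * ψ⁻¹)
            + PowerSeries.C (1 / 2 : ℚ) * (η - sder ψ * ψ⁻¹) ^ 2) := by
  have hψ0 : PowerSeries.constantCoeff ψ ≠ 0 := by rw [hψ]; norm_num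
  have hf0 : PowerSeries.constantCoeff (sder f) ≠ 0 := by
    have := PowerSeries.isUnit_iff_constantCoeff.mp hf
    exact this.ne_zero
  have h1 : ψ * ψ⁻¹ = 1 := PowerSeries.mul_inv_cancel _ hψ0
  have h2 : sder f * (sder f)⁻¹ = 1 := PowerSeries.mul_inv_cancel _ hf0
  have hinvψ0 : PowerSeries.constantCoeff ψ⁻¹ ≠ 0 := by
    rw [PowerSeries.constantCoeff_inv, hψ]; norm_num
  have hiinv : (ψ⁻¹)⁻¹ = ψ := (PowerSeries.inv_eq_iff_mul_eq_one hinvψ0).mpr h1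
  have hD0inv : (D0 ψ f)⁻¹ = ψ * (sder f)⁻¹ := by
    rw [D0, PowerSeries.mul_inv_rev, hiinv, mul_comm]
  have hu : IsUnit (D0 ψ f) := by
    rw [PowerSeries.isUnit_iff_constantCoeff, D0, map_mul,
      PowerSeries.constantCoeff_inv, hψ]
    simpa [isUnit_iff_ne_zero] using hf0
  have key2 : D2 ψ η (D0 ψ f) * (D0 ψ f)⁻¹
      = ψ⁻¹ * (sder (sder f) * (sder f)⁻¹ + η - sder ψ * ψ⁻¹) := by
    rw [hD0inv, D2, D0]
    simp only [sder_add, sder_mul, sder_inv]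
    linear_combination (ψ⁻¹ * sder (sder f) * (sder f)⁻¹ - ψ⁻¹^2 * sder ψ + ψ⁻¹ * η) * h1
      + (ψ⁻¹^2 * ψ * (η - ψ⁻¹ * sder ψ)) * h2
  refine ⟨hu, key2, ?_⟩
  rw [key2, D2, schwarzian]
  simp only [sder_add, sder_sub, sder_mul, sder_inv]
  have hC : PowerSeries.C (1 / 2 : ℚ) * 2 = 1 := by
    rw [← map_ofNat (PowerSeries.C (R := ℚ)) 2, ← map_mul]
    norm_num
  linear_combination (-(ψ⁻¹ ^ 2 * sder (sder f) * (sder f)⁻¹ * η) - ψ⁻¹ ^ 2 * η ^ 2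
    + ψ⁻¹ ^ 3 * sder (sder f) * (sder f)⁻¹ * sder ψ + 2 * ψ⁻¹ ^ 3 * sder ψ * η
    - ψ⁻¹ ^ 4 * sder ψ ^ 2) * hC
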